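/- Let A be a Noetherian ring and M a finitely generated A-module. Then the function y ↦ dim_{k(y)}(M ⊗_A k(y)) on Spec A is upper semi-continuous. -/

import Mathlib

set_option maxHeartbeats 1600000
set_option synthInstance.maxHeartbeats 400000


open scoped TensorProduct

universe u

/-- The dimension of the fibre `M ⊗_A k(p)` of a module `M` at a prime `p`, where
`k(p) = Frac(A/p)` is the residue field at `p`; the base change to `k(p)` is performed
in two steps, first to `A/p` and then to its fraction field. -/
noncomputable def fibreDimension (A : Type u) [CommRing A]
    (M : Type u) [AddCommGroup M] [Module A M] (p : PrimeSpectrum A) : ℕ :=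
  Module.finrank (FractionRing (A ⧸ p.asIdeal))
    (FractionRing (A ⧸ p.asIdeal) ⊗[A ⧸ p.asIdeal] ((A ⧸ p.asIdeal) ⊗[A] M))

section Aux

open TensorProduct

variable {A : Type u} [CommRing A] (p : PrimeSpectrum A)

/-- The canonical map from a module to its fibre at a prime. -/
noncomputable def toFibre {P : Type u} [AddCommGroup P] [Module A P] (m : P) :
    FractionRing (A ⧸ p.asIdeal) ⊗[A ⧸ p.asIdeal] ((A ⧸ p.asIdeal) ⊗[A] P) :=
  (1 : FractionRing (A ⧸ p.asIdeal)) ⊗ₜ[A ⧸ p.asIdeal] ((1 : A ⧸ p.asIdeal) ⊗ₜ[A] m)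

variable {P : Type u} [AddCommGroup P] [Module A P]

lemma toFibre_zero : toFibre p (0 : P) = 0 := by
  simp [toFibre]

lemma toFibre_add (m₁ m₂ : P) :
    toFibre p (m₁ + m₂) = toFibre p m₁ + toFibre p m₂ := by
  simp [toFibre, TensorProduct.tmul_add]

lemma toFibre_smul (a : A) (m : P) :
    toFibre p (a • m)
      = algebraMap (A ⧸ p.asIdeal) (FractionRing (A ⧸ p.asIdeal))
          (algebraMap A (A ⧸ p.asIdeal) a) • toFibre p m := by
  unfold toFibre
  rw [TensorProduct.tmul_smul,
    ← algebraMap_smul (A ⧸ p.asIdeal) a ((1 : A ⧸ p.asIdeal) ⊗ₜ[A] m),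
    TensorProduct.tmul_smul,
    ← algebraMap_smul (FractionRing (A ⧸ p.asIdeal)) (algebraMap A (A ⧸ p.asIdeal) a)]

lemma span_one_tmul_top (R : Type u) (B : Type u) (M : Type u) [CommRing R] [CommRing B]
    [Algebra R B] [AddCommGroup M] [Module R M] :
    Submodule.span B (Set.range fun m : M => (1 : B) ⊗ₜ[R] m) = ⊤ := by
  rw [eq_top_iff]
  rintro x -
  induction x using TensorProduct.induction_on with
  | zero => exact zero_mem _
  | tmul b m =>
      have h : b ⊗ₜ[R] m = b • ((1 : B) ⊗ₜ[R] m) := by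
        rw [TensorProduct.smul_tmul', smul_eq_mul, mul_one]
      rw [h]
      exact Submodule.smul_mem _ _ (Submodule.subset_span ⟨m, rfl⟩)
  | add x y hx hy => exact add_mem hx hy

lemma span_toFibre_top :
    Submodule.span (FractionRing (A ⧸ p.asIdeal)) (Set.range (toFibre p (P := P))) = ⊤ := by
  have key : ∀ w : (A ⧸ p.asIdeal) ⊗[A] P,
      (1 : FractionRing (A ⧸ p.asIdeal)) ⊗ₜ[A ⧸ p.asIdeal] w ∈
        Submodule.span (FractionRing (A ⧸ p.asIdeal)) (Set.range (toFibre p (P := P))) := by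
    intro w
    induction w using TensorProduct.induction_on with
    | zero =>
        rw [TensorProduct.tmul_zero]
        exact zero_mem _
    | tmul d m =>
        have h1 : (d : A ⧸ p.asIdeal) ⊗ₜ[A] m = d • ((1 : A ⧸ p.asIdeal) ⊗ₜ[A] m) := by
          rw [TensorProduct.smul_tmul', smul_eq_mul, mul_one]
        rw [h1, TensorProduct.tmul_smul,
          ← algebraMap_smul (FractionRing (A ⧸ p.asIdeal)) d]
        exact Submodule.smul_mem _ _ (Submodule.subset_span ⟨m, rfl⟩)
    | add x y hx hy =>
        rw [TensorProduct.tmul_add]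
        exact add_mem hx hy
  rw [eq_top_iff, ← span_one_tmul_top (A ⧸ p.asIdeal) (FractionRing (A ⧸ p.asIdeal))
    ((A ⧸ p.asIdeal) ⊗[A] P), Submodule.span_le]
  rintro _ ⟨w, rfl⟩
  exact key w

lemma toFibre_mem_span {ι : Type*} (x : ι → P) {m : P}
    (hm : m ∈ Submodule.span A (Set.range x)) :
    toFibre p m ∈ Submodule.span (FractionRing (A ⧸ p.asIdeal))
      (Set.range fun i => toFibre p (x i)) := by
  induction hm using Submodule.span_induction with
  | mem v hv =>
      obtain ⟨i, rfl⟩ := hv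
      exact Submodule.subset_span ⟨i, rfl⟩
  | zero =>
      rw [toFibre_zero]
      exact zero_mem _
  | add a b _ _ ha hb =>
      rw [toFibre_add]
      exact add_mem ha hb
  | smul a v _ hv =>
      rw [toFibre_smul]
      exact Submodule.smul_mem _ _ hv

/-- Nakayama: if the fibre of a finite module at `p` vanishes, then the localization of the
module at `p` vanishes. -/
lemma subsingleton_localizedModule_of_subsingleton_fibre
    (C : Type u) [AddCommGroup C] [Module A C] [Module.Finite A C]
    (h : Subsingleton (FractionRing (A ⧸ p.asIdeal) ⊗[A ⧸ p.asIdeal] ((A ⧸ p.asIdeal) ⊗[A] C))) :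
    Subsingleton (LocalizedModule p.asIdeal.primeCompl C) := by
  classical
  haveI : p.asIdeal.IsPrime := p.isPrime
  -- transfer the hypothesis to the localized module of `(A⧸p) ⊗ C` over `A⧸p`
  haveI hLM : IsLocalizedModule (nonZeroDivisors (A ⧸ p.asIdeal))
      (TensorProduct.mk (A ⧸ p.asIdeal) (FractionRing (A ⧸ p.asIdeal))
        ((A ⧸ p.asIdeal) ⊗[A] C) 1) :=
    (isLocalizedModule_iff_isBaseChange (nonZeroDivisors (A ⧸ p.asIdeal))
      (FractionRing (A ⧸ p.asIdeal)) _).mpr (TensorProduct.isBaseChange _ _ _)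
  haveI hsub : Subsingleton (LocalizedModule (nonZeroDivisors (A ⧸ p.asIdeal))
      ((A ⧸ p.asIdeal) ⊗[A] C)) :=
    (IsLocalizedModule.iso (nonZeroDivisors (A ⧸ p.asIdeal))
      (TensorProduct.mk (A ⧸ p.asIdeal) (FractionRing (A ⧸ p.asIdeal))
        ((A ⧸ p.asIdeal) ⊗[A] C) 1)).toEquiv.subsingleton
  have hann := LocalizedModule.subsingleton_iff.mp hsub
  -- find a single nonzerodivisor killing `(A⧸p) ⊗ C`
  obtain ⟨t, ht⟩ := Module.Finite.fg_top (R := A ⧸ p.asIdeal) (M := (A ⧸ p.asIdeal) ⊗[A] C)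
  choose sel hsel₁ hsel₂ using hann
  set s : A ⧸ p.asIdeal := ∏ m ∈ t, sel m with hs
  have hsS : s ∈ nonZeroDivisors (A ⧸ p.asIdeal) := prod_mem fun m _ => hsel₁ m
  have hkill : ∀ w : (A ⧸ p.asIdeal) ⊗[A] C, s • w = 0 := by
    have hker : (⊤ : Submodule (A ⧸ p.asIdeal) ((A ⧸ p.asIdeal) ⊗[A] C)) ≤
        LinearMap.ker (LinearMap.lsmul (A ⧸ p.asIdeal) ((A ⧸ p.asIdeal) ⊗[A] C) s) := by
      rw [← ht, Submodule.span_le]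
      intro m hm
      rw [SetLike.mem_coe, LinearMap.mem_ker, LinearMap.lsmul_apply, hs,
        ← Finset.prod_erase_mul t sel hm, mul_smul, hsel₂ m, smul_zero]
    intro w
    simpa using hker (Submodule.mem_top (x := w))
  have hs0 : s ≠ 0 := nonZeroDivisors.ne_zero hsS
  obtain ⟨r, hr⟩ := Ideal.Quotient.mk_surjective s
  have hrp : r ∉ p.asIdeal := fun hmem => hs0 (hr ▸ Ideal.Quotient.eq_zero_iff_mem.mpr hmem)
  -- hence `r • C ⊆ p • C`
  have key : ∀ c : C, r • c ∈ p.asIdeal • (⊤ : Submodule A C) := by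
    intro c
    have h0 : r • ((1 : A ⧸ p.asIdeal) ⊗ₜ[A] c) = 0 := by
      rw [← algebraMap_smul (A ⧸ p.asIdeal) r, Ideal.Quotient.algebraMap_eq, hr]
      exact hkill _
    have h1 := congrArg (TensorProduct.quotTensorEquivQuotSMul C p.asIdeal) h0
    rw [map_smul, map_zero] at h1
    have h2 : (TensorProduct.quotTensorEquivQuotSMul C p.asIdeal)
        ((1 : A ⧸ p.asIdeal) ⊗ₜ[A] c) = Submodule.Quotient.mk c := by
      have h3 : ((1 : A ⧸ p.asIdeal)) = Ideal.Quotient.mk p.asIdeal 1 := by rw [map_one]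
      rw [h3, TensorProduct.quotTensorEquivQuotSMul_mk_tmul, one_smul]
    rw [h2, ← Submodule.Quotient.mk_smul] at h1
    exact (Submodule.Quotient.mk_eq_zero _).mp h1
  -- now apply Nakayama over the local ring `A_p`
  set L := Localization.AtPrime p.asIdeal
  set CL := LocalizedModule p.asIdeal.primeCompl C with hCL
  letI ml := LocalizedModule.mkLinearMap p.asIdeal.primeCompl C
  haveI : Module.Finite L CL :=
    Module.Finite.of_isLocalizedModule p.asIdeal.primeCompl ml
  have hu : IsUnit (algebraMap A L r) := IsLocalization.map_units (M := p.asIdeal.primeCompl) L ⟨r, hrp⟩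
  have hle : (⊤ : Submodule L CL) ≤ (IsLocalRing.maximalIdeal L) • (⊤ : Submodule L CL) := by
    rintro u -
    induction u using LocalizedModule.induction_on with
    | h c t =>
      have hmem : ml (r • c) ∈ (IsLocalRing.maximalIdeal L) • (⊤ : Submodule L CL) := by
        refine Submodule.smul_induction_on (key c) ?_ ?_
        · intro a ha n _
          rw [map_smul, ← algebraMap_smul L a (ml n)]
          exact Submodule.smul_mem_smul
            ((IsLocalization.AtPrime.to_map_mem_maximal_iff L p.asIdeal a).mpr ha)
            Submodule.mem_top
        · intro w₁ w₂ h₁ h₂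
          rw [map_add]
          exact add_mem h₁ h₂
      have hml : ml (r • c) = algebraMap A L r • ml c := by
        rw [map_smul, algebraMap_smul]
      have h2 : ml c ∈ (IsLocalRing.maximalIdeal L) • (⊤ : Submodule L CL) := by
        have h3 := Submodule.smul_mem _ ((hu.unit⁻¹ : Lˣ) : L) hmem
        rwa [hml, smul_smul, IsUnit.val_inv_mul, one_smul] at h3
      have hmk : (LocalizedModule.mk c t : CL) = Localization.mk 1 t • ml c := by
        rw [show ml c = LocalizedModule.mk c (1 : p.asIdeal.primeCompl) from rfl,
          LocalizedModule.mk_smul_mk, one_smul, mul_one]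
      rw [hmk]
      exact Submodule.smul_mem _ _ h2
  have hbot := Submodule.eq_bot_of_le_smul_of_le_jacobson_bot (IsLocalRing.maximalIdeal L)
    ⊤ Module.Finite.fg_top hle
    (by rw [IsLocalRing.jacobson_eq_maximalIdeal ⊥ bot_ne_top])
  refine subsingleton_of_forall_eq 0 fun u => ?_
  have hu0 : u ∈ (⊥ : Submodule L CL) := hbot ▸ Submodule.mem_top
  simpa using hu0

end Aux

/-- Let `A` be a Noetherian ring and `M` a finitely generated `A`-module.  Then the
function `y ↦ dim_{k(y)} (M ⊗_A k(y))` is upper semi-continuous on `Spec A`. -/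
theorem upperSemicontinuous_fibreDimension (A : Type u) [CommRing A] [IsNoetherianRing A]
    (M : Type u) [AddCommGroup M] [Module A M] [Module.Finite A M] :
    UpperSemicontinuous (fun p : PrimeSpectrum A => fibreDimension A M p) := by
  classical
  intro y n hn
  haveI : y.asIdeal.IsPrime := y.isPrime
  -- choose `d = fibreDimension A M y` elements of `M` whose images form a basis of the fibre
  have hsp : ⊤ ≤ Submodule.span (FractionRing (A ⧸ y.asIdeal))
      (Set.range (toFibre y (P := M))) := (span_toFibre_top y).ge
  let b := Module.Basis.ofSpan hsp
  haveI := FiniteDimensional.fintypeBasisIndex b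
  have hd : fibreDimension A M y = Module.finrank (FractionRing (A ⧸ y.asIdeal))
      (FractionRing (A ⧸ y.asIdeal) ⊗[A ⧸ y.asIdeal] ((A ⧸ y.asIdeal) ⊗[A] M)) := rfl
  let e := Fintype.equivFinOfCardEq (n := fibreDimension A M y)
    (by rw [hd]; exact (Module.finrank_eq_card_basis b).symm)
  have hbs : ∀ j, b j ∈ Set.range (toFibre y (P := M)) :=
    fun j => Module.Basis.ofSpan_subset hsp ⟨j, rfl⟩
  choose xm hxm using hbs
  set x : Fin (fibreDimension A M y) → M := fun i => xm (e.symm i) with hx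
  have hspan : Submodule.span (FractionRing (A ⧸ y.asIdeal))
      (Set.range fun i => toFibre y (x i)) = ⊤ := by
    have h1 : (fun i => toFibre y (x i)) = b ∘ e.symm := funext fun i => hxm (e.symm i)
    rw [h1, Set.range_comp, Equiv.range_eq_univ, Set.image_univ, b.span_eq]
  set N := Submodule.span A (Set.range x) with hN
  -- the fibre of `M ⧸ N` at `y` vanishes
  let F := LinearMap.baseChange (FractionRing (A ⧸ y.asIdeal))
    (LinearMap.baseChange (A ⧸ y.asIdeal) N.mkQ)
  have hF : ∀ m : M, F (toFibre y m) = toFibre y (N.mkQ m) := by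
    intro m
    simp [F, toFibre, LinearMap.baseChange_tmul]
  have hCy : Subsingleton (FractionRing (A ⧸ y.asIdeal) ⊗[A ⧸ y.asIdeal]
      ((A ⧸ y.asIdeal) ⊗[A] (M ⧸ N))) := by
    have hle : Submodule.span (FractionRing (A ⧸ y.asIdeal))
        (Set.range (toFibre y (P := M ⧸ N))) ≤ ⊥ := by
      rw [Submodule.span_le]
      rintro _ ⟨c, rfl⟩
      obtain ⟨m, rfl⟩ := N.mkQ_surjective c
      rw [SetLike.mem_coe, Submodule.mem_bot, ← hF m]
      have hz0 : ∀ v ∈ Submodule.span (FractionRing (A ⧸ y.asIdeal))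
          (Set.range fun i => toFibre y (x i)), F v = 0 := by
        intro v hv
        induction hv using Submodule.span_induction with
        | mem v hv =>
            obtain ⟨i, rfl⟩ := hv
            rw [hF]
            have h0 : N.mkQ (x i) = 0 :=
              (Submodule.Quotient.mk_eq_zero N).mpr (Submodule.subset_span ⟨i, rfl⟩)
            rw [h0, toFibre_zero]
        | zero => exact map_zero F
        | add u v _ _ hu hv => rw [map_add, hu, hv, add_zero]
        | smul c v _ hv => rw [map_smul, hv, smul_zero]
      exact hz0 _ (by rw [hspan]; trivial)
    refine subsingleton_of_forall_eq 0 fun v => ?_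
    have hv : v ∈ Submodule.span (FractionRing (A ⧸ y.asIdeal))
        (Set.range (toFibre y (P := M ⧸ N))) := by rw [span_toFibre_top]; trivial
    simpa using hle hv
  have hySupp : y ∉ Module.support A (M ⧸ N) :=
    Module.notMem_support_iff.mpr
      (subsingleton_localizedModule_of_subsingleton_fibre y (M ⧸ N) hCy)
  have hop : IsOpen (Module.support A (M ⧸ N))ᶜ :=
    (Module.isClosed_support (R := A) (M := M ⧸ N)).isOpen_compl
  filter_upwards [hop.mem_nhds hySupp] with z hz
  haveI : z.asIdeal.IsPrime := z.isPrime
  rw [Set.mem_compl_iff, Module.notMem_support_iff'] at hz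
  refine lt_of_le_of_lt ?_ hn
  show fibreDimension A M z ≤ fibreDimension A M y
  -- the images of the `x i` span the fibre of `M` at `z`
  have hsz : Submodule.span (FractionRing (A ⧸ z.asIdeal))
      (Set.range fun i => toFibre z (x i)) = ⊤ := by
    rw [eq_top_iff, ← span_toFibre_top z (P := M), Submodule.span_le]
    rintro _ ⟨m, rfl⟩
    obtain ⟨r, hr, hrm⟩ := hz (N.mkQ m)
    have hrN : r • m ∈ N := by
      refine (Submodule.Quotient.mk_eq_zero N).mp ?_
      rw [Submodule.Quotient.mk_smul]
      exact hrm
    have h1 := toFibre_mem_span z x hrN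
    rw [toFibre_smul] at h1
    have hune : (algebraMap A (A ⧸ z.asIdeal) r) ∈ nonZeroDivisors (A ⧸ z.asIdeal) := by
      refine mem_nonZeroDivisors_of_ne_zero ?_
      rw [Ideal.Quotient.algebraMap_eq]
      exact fun h0 => hr (Ideal.Quotient.eq_zero_iff_mem.mp h0)
    have hu : IsUnit (algebraMap (A ⧸ z.asIdeal) (FractionRing (A ⧸ z.asIdeal))
        (algebraMap A (A ⧸ z.asIdeal) r)) :=
      IsLocalization.map_units (FractionRing (A ⧸ z.asIdeal)) ⟨algebraMap A (A ⧸ z.asIdeal) r, hune⟩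
    have h2 := Submodule.smul_mem _
      ((hu.unit⁻¹ : (FractionRing (A ⧸ z.asIdeal))ˣ) : FractionRing (A ⧸ z.asIdeal)) h1
    rwa [smul_smul, IsUnit.val_inv_mul, one_smul] at h2
  -- hence the dimension of the fibre at `z` is at most `d`
  have hdz : fibreDimension A M z = Module.finrank (FractionRing (A ⧸ z.asIdeal))
      (FractionRing (A ⧸ z.asIdeal) ⊗[A ⧸ z.asIdeal] ((A ⧸ z.asIdeal) ⊗[A] M)) := rfl
  rw [hdz, ← finrank_top, ← hsz]
  refine le_trans (finrank_span_le_card _) ?_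
  rw [Set.toFinset_range]
  exact le_trans Finset.card_image_le (by simp)
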